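/- (Dense model theorem.) For every ε > 0 there exists η with 0 < η ≤ 1 such that the following holds. Let X be a finite nonempty set and let 𝓕 be a family of functions X → [−1,1]. Let ν : X → ℝ be nonnegative with 𝔼[ν] ≤ 1 + η and such that |𝔼[(ν − 1) · ∏_{i=1}^k F_i]| ≤ η for every positive integer k and all F_1,…,F_k ∈ 𝓕. Then for every g : X → ℝ with 0 ≤ g ≤ ν pointwise there exists w : X → [0,1] such that |𝔼[(g − w)·F]| ≤ ε for every F ∈ 𝓕. -/

import Mathlib

open Finset

/-- The average of a real-valued function on a finite type. -/
noncomputable def avg (α : Type*) [Fintype α] (f : α → ℝ) : ℝ :=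
  (∑ x, f x) / (Fintype.card α : ℝ)

section helpers
set_option linter.unusedSectionVars false
variable {X : Type} [Fintype X] [Nonempty X]

lemma cardX_pos : (0:ℝ) < (Fintype.card X : ℝ) := by
  exact_mod_cast Fintype.card_pos

lemma avg_le_avg {f h : X → ℝ} (hfh : ∀ x, f x ≤ h x) : avg X f ≤ avg X h :=
  div_le_div_of_nonneg_right (Finset.sum_le_sum fun x _ => hfh x) cardX_pos.le |>.trans_eq rfl

lemma avg_finsum {ι : Type*} (s : Finset ι) (f : ι → X → ℝ) :
    avg X (fun x => ∑ i ∈ s, f i x) = ∑ i ∈ s, avg X (f i) := by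
  unfold avg
  rw [Finset.sum_comm, Finset.sum_div]

lemma avg_const_mul (c : ℝ) (f : X → ℝ) : avg X (fun x => c * f x) = c * avg X f := by
  unfold avg
  rw [← Finset.mul_sum, mul_div_assoc]

lemma avg_const (c : ℝ) : avg X (fun _ => c) = c := by
  unfold avg
  rw [Finset.sum_const, card_univ, nsmul_eq_mul]
  field_simp

lemma avg_add (f h : X → ℝ) : avg X (fun x => f x + h x) = avg X f + avg X h := by
  unfold avg; rw [Finset.sum_add_distrib, add_div]

lemma avg_congr {f h : X → ℝ} (hfh : ∀ x, f x = h x) : avg X f = avg X h := by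
  unfold avg; rw [Finset.sum_congr rfl fun x _ => hfh x]

end helpers

section estimate
variable {X ι : Type} [Fintype X] [Nonempty X] [Fintype ι]

/-- power correlation bound -/
lemma pow_corr (s : ι → X → ℝ) (lam : ι → ℝ) (hlam : ∀ i, 0 ≤ lam i)
    (hsum : ∑ i, lam i = 1) (ν : X → ℝ) (η : ℝ)
    (hprod : ∀ (k : ℕ), 0 < k → ∀ c : Fin k → ι,
      |avg X fun x => (ν x - 1) * ∏ l, s (c l) x| ≤ η)
    (j : ℕ) (hj : 0 < j) :
    |avg X fun x => (ν x - 1) * (∑ i, lam i * s i x) ^ j| ≤ η := by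
  have expand : ∀ x, (ν x - 1) * (∑ i, lam i * s i x) ^ j
      = ∑ c : Fin j → ι, (∏ l, lam (c l)) * ((ν x - 1) * ∏ l, s (c l) x) := by
    intro x
    rw [Finset.sum_pow' (univ : Finset ι) (fun i => lam i * s i x) j]
    rw [Fintype.piFinset_univ, Finset.mul_sum]
    refine Finset.sum_congr rfl fun c _ => ?_
    rw [Finset.prod_mul_distrib]; ring
  rw [avg_congr expand, avg_finsum]
  have key : ∀ c : Fin j → ι,
      |avg X fun x => (∏ l, lam (c l)) * ((ν x - 1) * ∏ l, s (c l) x)|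
        ≤ (∏ l, lam (c l)) * η := by
    intro c
    rw [avg_const_mul, abs_mul, abs_of_nonneg (Finset.prod_nonneg fun l _ => hlam (c l))]
    exact mul_le_mul_of_nonneg_left (hprod j hj c)
      (Finset.prod_nonneg fun l _ => hlam (c l))
  calc |∑ c : Fin j → ι, avg X fun x => (∏ l, lam (c l)) * ((ν x - 1) * ∏ l, s (c l) x)|
      ≤ ∑ c : Fin j → ι, (∏ l, lam (c l)) * η :=
        (Finset.abs_sum_le_sum_abs _ _).trans (Finset.sum_le_sum fun c _ => key c)
    _ = (∑ i, lam i) ^ j * η := by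
        rw [Finset.sum_pow' (univ : Finset ι) lam j, Fintype.piFinset_univ, Finset.sum_mul]
    _ = η := by rw [hsum, one_pow, one_mul]

lemma estimate (s : ι → X → ℝ) (lam : ι → ℝ) (hlam : ∀ i, 0 ≤ lam i)
    (hsum : ∑ i, lam i = 1) (hs1 : ∀ i x, |s i x| ≤ 1)
    (ν : X → ℝ) (hν0 : ∀ x, 0 ≤ ν x) (η : ℝ)
    (hνavg : avg X ν ≤ 1 + η)
    (hprod : ∀ (k : ℕ), 0 < k → ∀ c : Fin k → ι,
      |avg X fun x => (ν x - 1) * ∏ l, s (c l) x| ≤ η)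
    (q : Polynomial ℝ) (hq0 : q.coeff 0 = 0) (γ : ℝ) (hγ : 0 ≤ γ)
    (hq : ∀ r ∈ Set.Icc (-1:ℝ) 1, |q.eval r - max r 0| ≤ γ) :
    avg X (fun x => (ν x - 1) * max (∑ i, lam i * s i x) 0)
      ≤ (∑ j ∈ q.support, |q.coeff j|) * η + γ * (2 + η) := by
  set t : X → ℝ := fun x => ∑ i, lam i * s i x with ht
  have htb : ∀ x, t x ∈ Set.Icc (-1:ℝ) 1 := by
    intro x
    have h1 : |t x| ≤ 1 := by
      calc |t x| ≤ ∑ i, |lam i * s i x| := Finset.abs_sum_le_sum_abs _ _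
        _ ≤ ∑ i, lam i := Finset.sum_le_sum fun i _ => by
            rw [abs_mul, abs_of_nonneg (hlam i)]
            calc lam i * |s i x| ≤ lam i * 1 :=
              mul_le_mul_of_nonneg_left (hs1 i x) (hlam i)
              _ = lam i := mul_one _
        _ = 1 := hsum
    exact ⟨neg_le_of_abs_le h1, le_of_abs_le h1⟩
  have split : ∀ x, (ν x - 1) * max (t x) 0
      = (ν x - 1) * q.eval (t x) + (ν x - 1) * (max (t x) 0 - q.eval (t x)) := by
    intro x; ring
  rw [avg_congr split, avg_add]
  have part1 : avg X (fun x => (ν x - 1) * q.eval (t x))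
      ≤ (∑ j ∈ q.support, |q.coeff j|) * η := by
    have expand : ∀ x, (ν x - 1) * q.eval (t x)
        = ∑ j ∈ q.support, q.coeff j * ((ν x - 1) * t x ^ j) := by
      intro x
      rw [Polynomial.eval_eq_sum, Polynomial.sum_def, Finset.mul_sum]
      exact Finset.sum_congr rfl fun j _ => by ring
    rw [avg_congr expand, avg_finsum, Finset.sum_mul]
    refine le_trans (le_abs_self _) ((Finset.abs_sum_le_sum_abs _ _).trans
      (Finset.sum_le_sum fun j hj => ?_))
    have hjpos : 0 < j := by
      rcases Nat.eq_zero_or_pos j with h | h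
      · exfalso; exact (Polynomial.mem_support_iff.mp hj) (h ▸ hq0)
      · exact h
    rw [avg_const_mul, abs_mul]
    exact mul_le_mul_of_nonneg_left
      (pow_corr s lam hlam hsum ν η hprod j hjpos) (abs_nonneg _)
  have part2 : avg X (fun x => (ν x - 1) * (max (t x) 0 - q.eval (t x)))
      ≤ γ * (2 + η) := by
    have ptw : ∀ x, (ν x - 1) * (max (t x) 0 - q.eval (t x)) ≤ (ν x + 1) * γ := by
      intro x
      have h1 : |(ν x - 1) * (max (t x) 0 - q.eval (t x))| ≤ |ν x - 1| * γ := by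
        rw [abs_mul]
        refine mul_le_mul_of_nonneg_left ?_ (abs_nonneg _)
        rw [abs_sub_comm]
        exact hq (t x) (htb x)
      have h2 : |ν x - 1| ≤ ν x + 1 := by
        rw [abs_sub_le_iff]
        constructor <;> nlinarith [hν0 x]
      calc (ν x - 1) * (max (t x) 0 - q.eval (t x)) ≤ |ν x - 1| * γ :=
            (le_abs_self _).trans h1
        _ ≤ (ν x + 1) * γ := mul_le_mul_of_nonneg_right h2 hγ
    calc avg X (fun x => (ν x - 1) * (max (t x) 0 - q.eval (t x)))
        ≤ avg X (fun x => (ν x + 1) * γ) := avg_le_avg ptw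
      _ = avg X (fun x => γ * (ν x + 1)) := avg_congr fun x => by ring
      _ = γ * (avg X ν + 1) := by
          rw [avg_const_mul, avg_add, avg_const]
      _ ≤ γ * (2 + η) := by
          refine mul_le_mul_of_nonneg_left ?_ hγ
          linarith
  linarith

end estimate

section sep
variable {X ι : Type} [Fintype X] [Nonempty X] [Fintype ι]

lemma separation (s : ι → X → ℝ) (g : X → ℝ) (ε : ℝ)
    (h : ∀ w : X → ℝ, (∀ x, w x ∈ Set.Icc (0:ℝ) 1) →
      ∃ i, ε < avg X fun x => (g x - w x) * s i x) :
    ∃ lam : ι → ℝ, (∀ i, 0 ≤ lam i) ∧ ∑ i, lam i = 1 ∧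
      ∀ w : X → ℝ, (∀ x, w x ∈ Set.Icc (0:ℝ) 1) →
        ε < avg X fun x => (g x - w x) * (∑ i, lam i * s i x) := by
  classical
  set Φ : (X → ℝ) → (ι → ℝ) := fun w i => avg X fun x => (g x - w x) * s i x with hΦ
  set W : Set (X → ℝ) := Set.pi Set.univ fun _ : X => Set.Icc (0:ℝ) 1 with hW
  have hWmem : ∀ w : X → ℝ, w ∈ W ↔ ∀ x, w x ∈ Set.Icc (0:ℝ) 1 := by
    intro w; simp [hW, Set.mem_univ_pi, Pi.le_def, forall_and]
  set A : Set (ι → ℝ) := Φ '' W with hA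
  set B : Set (ι → ℝ) := Set.pi Set.univ fun _ : ι => Set.Iic ε with hB
  have hBmem : ∀ y : ι → ℝ, y ∈ B ↔ ∀ i, y i ≤ ε := by
    intro y; simp [hB, Set.mem_univ_pi, Pi.le_def]
  -- convexity of A
  have hAconv : Convex ℝ A := by
    rintro _ ⟨w1, hw1, rfl⟩ _ ⟨w2, hw2, rfl⟩ a b ha hb hab
    refine ⟨a • w1 + b • w2, ?_, ?_⟩
    · rw [hWmem] at hw1 hw2 ⊢
      intro x
      obtain ⟨h10, h11⟩ := hw1 x
      obtain ⟨h20, h21⟩ := hw2 x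
      simp only [Pi.add_apply, Pi.smul_apply, smul_eq_mul]
      constructor
      · positivity
      · nlinarith
    · funext i
      simp only [hΦ, Pi.add_apply, Pi.smul_apply, smul_eq_mul]
      have : (avg X fun x => (g x - (a * w1 x + b * w2 x)) * s i x)
          = avg X fun x => a * ((g x - w1 x) * s i x) + b * ((g x - w2 x) * s i x) :=
        avg_congr fun x => by linear_combination (-(g x * s i x)) * hab
      rw [this, avg_add, avg_const_mul, avg_const_mul]
  -- compactness of A
  have hWcomp : IsCompact W := isCompact_univ_pi fun _ => isCompact_Icc
  have hΦcont : Continuous Φ := by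
    refine continuous_pi fun i => ?_
    show Continuous fun w : X → ℝ => avg X fun x => (g x - w x) * s i x
    unfold avg
    exact (continuous_finset_sum _ fun x _ =>
      ((continuous_const.sub (continuous_apply x)).mul continuous_const)).div_const _
  have hAcomp : IsCompact A := hWcomp.image hΦcont
  -- B closed convex
  have hBconv : Convex ℝ B := convex_pi fun _ _ => convex_Iic ε
  have hBclosed : IsClosed B := isClosed_set_pi fun _ _ => isClosed_Iic
  -- disjoint
  have hdisj : Disjoint A B := by
    rw [Set.disjoint_left]
    rintro _ ⟨w, hw, rfl⟩ hmem
    obtain ⟨i, hi⟩ := h w ((hWmem w).mp hw)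
    exact absurd ((hBmem _).mp hmem i) (not_le.mpr hi)
  obtain ⟨f, u, v, hu, huv, hv⟩ :=
    geometric_hahn_banach_compact_closed hAconv hAcomp hBconv hBclosed hdisj
  -- basis vectors
  set e : ι → ι → ℝ := fun i j => if i = j then 1 else 0 with he
  have hrepr : ∀ y : ι → ℝ, f y = ∑ i, y i * f (e i) := by
    intro y
    have := (f : (ι → ℝ) →ₗ[ℝ] ℝ).pi_apply_eq_sum_univ y
    simpa [he, smul_eq_mul] using this
  set lam0 : ι → ℝ := fun i => -(f (e i)) with hlam0
  have hb0 : (fun _ : ι => ε) ∈ B := (hBmem _).mpr fun i => le_refl ε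
  have hvb0 : v < f (fun _ => ε) := hv _ hb0
  -- nonnegativity of lam0
  have hlam0nn : ∀ i, 0 ≤ lam0 i := by
    intro i
    by_contra hneg
    push_neg at hneg
    have hd : 0 < f (e i) := by simp only [hlam0] at hneg; linarith
    set R : ℝ := (f (fun _ => ε) - v) / f (e i) with hR
    have hRpos : 0 < R := div_pos (by linarith) hd
    have hbmem : ((fun _ : ι => ε) - R • e i) ∈ B := by
      rw [hBmem]
      intro j
      simp only [Pi.sub_apply, Pi.smul_apply, smul_eq_mul, he]
      have : 0 ≤ R * (if i = j then (1:ℝ) else 0) := by positivity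
      linarith
    have := hv _ hbmem
    rw [map_sub, map_smul, smul_eq_mul, hR, div_mul_cancel₀ _ hd.ne'] at this
    linarith
  -- w0 gives A nonempty
  have hw0 : (fun _ : X => (0:ℝ)) ∈ W := (hWmem _).mpr fun x => ⟨le_refl 0, zero_le_one⟩
  have ha0 : Φ (fun _ => 0) ∈ A := ⟨_, hw0, rfl⟩
  -- sum positive
  set S : ℝ := ∑ i, lam0 i with hS
  have hSnn : 0 ≤ S := Finset.sum_nonneg fun i _ => hlam0nn i
  have hSpos : 0 < S := by
    rcases hSnn.lt_or_eq with hlt | heq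
    · exact hlt
    · exfalso
      have hall : ∀ i ∈ (univ : Finset ι), lam0 i = 0 :=
        (Finset.sum_eq_zero_iff_of_nonneg fun i _ => hlam0nn i).mp heq.symm
      have hf0 : ∀ y : ι → ℝ, f y = 0 := by
        intro y
        rw [hrepr y]
        refine Finset.sum_eq_zero fun i _ => ?_
        have : f (e i) = 0 := by
          have := hall i (mem_univ i); simp only [hlam0] at this; linarith
        rw [this, mul_zero]
      have h1 := hu _ ha0
      rw [hf0] at h1
      rw [hf0] at hvb0
      linarith
  -- key inequality for all w
  have hkey : ∀ w ∈ W, ε * S < ∑ i, lam0 i * Φ w i := by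
    intro w hw
    have h1 : f (Φ w) < v := lt_trans (hu _ ⟨w, hw, rfl⟩) huv
    have h2 : f (Φ w) < f (fun _ => ε) := lt_trans h1 hvb0
    rw [hrepr (Φ w), hrepr (fun _ => ε)] at h2
    have hL : ∑ i, Φ w i * f (e i) = -∑ i, lam0 i * Φ w i := by
      rw [← Finset.sum_neg_distrib]
      exact Finset.sum_congr rfl fun i _ => by simp only [hlam0]; ring
    have hRR : ∑ i, ε * f (e i) = -(ε * S) := by
      rw [hS, Finset.mul_sum, ← Finset.sum_neg_distrib]
      exact Finset.sum_congr rfl fun i _ => by simp only [hlam0]; ring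
    rw [hL, hRR] at h2
    linarith
  -- normalize
  refine ⟨fun i => lam0 i / S, fun i => div_nonneg (hlam0nn i) hSnn, ?_, ?_⟩
  · rw [← Finset.sum_div, ← hS, div_self hSpos.ne']
  · intro w hw
    have h1 := hkey w ((hWmem w).mpr hw)
    have h2 : (avg X fun x => (g x - w x) * (∑ i, lam0 i / S * s i x))
        = ∑ i, lam0 i / S * Φ w i := by
      rw [show (avg X fun x => (g x - w x) * (∑ i, lam0 i / S * s i x))
          = avg X fun x => ∑ i, lam0 i / S * ((g x - w x) * s i x) from
        avg_congr fun x => by rw [Finset.mul_sum]; exact Finset.sum_congr rfl fun i _ => by ring]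
      rw [avg_finsum]
      exact Finset.sum_congr rfl fun i _ => avg_const_mul _ _
    rw [h2]
    have h3 : ∑ i, lam0 i / S * Φ w i = (∑ i, lam0 i * Φ w i) / S := by
      rw [Finset.sum_div]
      exact Finset.sum_congr rfl fun i _ => by ring
    rw [h3, lt_div_iff₀ hSpos]
    linarith

/-- The finite-family version of the dense model theorem. -/
lemma finite_lemma (s : ι → X → ℝ) (hs1 : ∀ i x, |s i x| ≤ 1)
    (ν g : X → ℝ) (hν0 : ∀ x, 0 ≤ ν x)
    (hg0 : ∀ x, 0 ≤ g x) (hgν : ∀ x, g x ≤ ν x)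
    (η : ℝ) (hνavg : avg X ν ≤ 1 + η)
    (hprod : ∀ (k : ℕ), 0 < k → ∀ c : Fin k → ι,
      |avg X fun x => (ν x - 1) * ∏ l, s (c l) x| ≤ η)
    (ε : ℝ)
    (q : Polynomial ℝ) (hq0 : q.coeff 0 = 0) (γ : ℝ) (hγ : 0 ≤ γ)
    (hq : ∀ r ∈ Set.Icc (-1:ℝ) 1, |q.eval r - max r 0| ≤ γ)
    (hbound : (∑ j ∈ q.support, |q.coeff j|) * η + γ * (2 + η) ≤ ε) :
    ∃ w : X → ℝ, (∀ x, w x ∈ Set.Icc (0:ℝ) 1) ∧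
      ∀ i, avg X (fun x => (g x - w x) * s i x) ≤ ε := by
  by_contra hcon
  push_neg at hcon
  obtain ⟨lam, hlam0, hlamsum, hlam⟩ := separation s g ε hcon
  set t : X → ℝ := fun x => ∑ i, lam i * s i x with htdef
  set w : X → ℝ := fun x => if 0 < t x then 1 else 0 with hwdef
  have hwW : ∀ x, w x ∈ Set.Icc (0:ℝ) 1 := by
    intro x; simp only [hwdef]
    split <;> simp
  have h1 := hlam w hwW
  have h2 : avg X (fun x => (g x - w x) * t x)
      ≤ avg X (fun x => (ν x - 1) * max (t x) 0) := by
    refine avg_le_avg fun x => ?_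
    by_cases hx : 0 < t x
    · have hw1 : w x = 1 := by simp only [hwdef]; rw [if_pos hx]
      rw [hw1, max_eq_left hx.le]
      exact mul_le_mul_of_nonneg_right (by linarith [hgν x]) hx.le
    · push_neg at hx
      have hw1 : w x = 0 := by simp only [hwdef]; rw [if_neg (not_lt.mpr hx)]
      rw [hw1, max_eq_right hx, mul_zero, sub_zero]
      exact mul_nonpos_of_nonneg_of_nonpos (hg0 x) hx
  have h3 := estimate s lam hlam0 hlamsum hs1 ν hν0 η hνavg hprod q hq0 γ hγ hq
  linarith

end sep

/-- The dense model theorem. -/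
theorem stmt8 (ε : ℝ) (hε : 0 < ε) :
    ∃ η : ℝ, 0 < η ∧ η ≤ 1 ∧
      ∀ (X : Type) [Fintype X] [Nonempty X] (𝓕 : Set (X → ℝ)),
        (∀ F ∈ 𝓕, ∀ x, F x ∈ Set.Icc (-1 : ℝ) 1) →
        ∀ ν : X → ℝ, (∀ x, 0 ≤ ν x) →
          avg X ν ≤ 1 + η →
          (∀ (k : ℕ), 0 < k → ∀ F : Fin k → X → ℝ, (∀ i, F i ∈ 𝓕) →
            |avg X fun x => (ν x - 1) * ∏ i, F i x| ≤ η) →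
          ∀ g : X → ℝ, (∀ x, 0 ≤ g x ∧ g x ≤ ν x) →
            ∃ w : X → ℝ, (∀ x, w x ∈ Set.Icc (0 : ℝ) 1) ∧
              ∀ F ∈ 𝓕, |avg X fun x => (g x - w x) * F x| ≤ ε := by
  classical
  -- Weierstrass approximation of r ↦ max r 0
  obtain ⟨p, hp⟩ := exists_polynomial_near_of_continuousOn (-1) 1 (fun r => max r 0)
    ((continuous_id.max continuous_const).continuousOn) (ε/12) (by positivity)
  set q : Polynomial ℝ := p - Polynomial.C (p.eval 0) with hqdef
  have hq0 : q.coeff 0 = 0 := by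
    simp [hqdef, Polynomial.coeff_sub, ← Polynomial.coeff_zero_eq_eval_zero]
  have hqapprox : ∀ r ∈ Set.Icc (-1:ℝ) 1, |q.eval r - max r 0| ≤ ε/6 := by
    intro r hr
    have h1 := hp r hr
    have h2 := hp 0 ⟨by norm_num, by norm_num⟩
    rw [max_self] at h2
    have hqe : q.eval r = p.eval r - p.eval 0 := by
      simp [hqdef]
    rw [hqe]
    have : |p.eval r - p.eval 0 - max r 0| ≤ |p.eval r - max r 0| + |p.eval 0 - 0| := by
      have := abs_sub (p.eval r - max r 0) (p.eval 0 - 0)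
      rw [show p.eval r - p.eval 0 - max r 0 = (p.eval r - max r 0) - (p.eval 0 - 0) by ring]
      exact this
    linarith
  set M : ℝ := ∑ j ∈ q.support, |q.coeff j| with hM
  have hM0 : 0 ≤ M := Finset.sum_nonneg fun j _ => abs_nonneg _
  set η : ℝ := min 1 (ε/(2*(M+1))) with hη
  have hη0 : 0 < η := lt_min one_pos (by positivity)
  have hη1 : η ≤ 1 := min_le_left _ _
  have hηM : η ≤ ε/(2*(M+1)) := min_le_right _ _
  have hbound : M * η + (ε/6) * (2 + η) ≤ ε := by
    have h1 : M * η ≤ M * (ε/(2*(M+1))) := mul_le_mul_of_nonneg_left hηM hM0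
    have h2 : M * (ε/(2*(M+1))) ≤ ε/2 := by
      rw [mul_div_assoc', div_le_div_iff₀ (by positivity) (by norm_num)]
      nlinarith
    have h3 : (ε/6) * (2 + η) ≤ ε/2 := by nlinarith
    linarith
  refine ⟨η, hη0, hη1, ?_⟩
  intro X _ _ 𝓕 h𝓕 ν hν0 hνavg hν𝓕 g hg
  -- compactness reduction to finite families
  set K : {S : Finset (X → ℝ) // ↑S ⊆ 𝓕} → Set (X → ℝ) := fun S =>
    {w | (∀ x, w x ∈ Set.Icc (0:ℝ) 1) ∧
      ∀ F ∈ S.1, |avg X fun x => (g x - w x) * F x| ≤ ε} with hK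
  haveI : Nonempty {S : Finset (X → ℝ) // ↑S ⊆ 𝓕} := ⟨⟨∅, by simp⟩⟩
  have hKW : ∀ S, K S ⊆ Set.pi Set.univ fun _ : X => Set.Icc (0:ℝ) 1 := by
    intro S w hw
    rw [Set.mem_univ_pi]
    exact hw.1
  have hKclosed : ∀ S, IsClosed (K S) := by
    intro S
    have : K S = (Set.pi Set.univ fun _ : X => Set.Icc (0:ℝ) 1) ∩
        ⋂ F ∈ S.1, {w | |avg X fun x => (g x - w x) * F x| ≤ ε} := by
      ext w
      simp only [hK, Set.mem_setOf_eq, Set.mem_inter_iff, Set.mem_univ_pi, Set.mem_iInter]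
    rw [this]
    refine IsClosed.inter (isClosed_set_pi fun _ _ => isClosed_Icc) ?_
    refine isClosed_biInter fun F _ => ?_
    have hc : Continuous fun w : X → ℝ => |avg X fun x => (g x - w x) * F x| := by
      refine Continuous.abs ?_
      unfold avg
      exact (continuous_finset_sum _ fun x _ =>
        ((continuous_const.sub (continuous_apply x)).mul continuous_const)).div_const _
    exact isClosed_le hc continuous_const
  have hKcomp : ∀ S, IsCompact (K S) :=
    fun S => (isCompact_univ_pi fun _ => isCompact_Icc).of_isClosed_subset
      (hKclosed S) (hKW S)
  have hKdir : Directed (· ⊇ ·) K := by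
    intro S1 S2
    refine ⟨⟨S1.1 ∪ S2.1, by
      rw [Finset.coe_union]; exact Set.union_subset S1.2 S2.2⟩, ?_, ?_⟩
    · intro w hw
      exact ⟨hw.1, fun F hF => hw.2 F (Finset.mem_union_left _ hF)⟩
    · intro w hw
      exact ⟨hw.1, fun F hF => hw.2 F (Finset.mem_union_right _ hF)⟩
  have hKne : ∀ S, (K S).Nonempty := by
    intro S
    -- the finite family with signs
    set ι : Type := {F // F ∈ S.1} × Bool with hι
    set s : ι → X → ℝ := fun i x => if i.2 then i.1.1 x else -(i.1.1 x) with hs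
    have hmem𝓕 : ∀ i : ι, i.1.1 ∈ 𝓕 := fun i => S.2 i.1.2
    have hs1 : ∀ (i : ι) (x : X), |s i x| ≤ 1 := by
      intro i x
      obtain ⟨hF1, hF2⟩ := h𝓕 i.1.1 (hmem𝓕 i) x
      simp only [hs]
      split <;> rw [abs_le] <;> constructor <;> linarith
    have hprod : ∀ (k : ℕ), 0 < k → ∀ c : Fin k → ι,
        |avg X fun x => (ν x - 1) * ∏ l, s (c l) x| ≤ η := by
      intro k hk c
      set σ : ℝ := ∏ l, (if (c l).2 then (1:ℝ) else -1) with hσ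
      have hσabs : |σ| = 1 := by
        rw [hσ, Finset.abs_prod]
        refine Finset.prod_eq_one fun l _ => ?_
        split <;> simp
      have hexp : ∀ x, (ν x - 1) * ∏ l, s (c l) x
          = σ * ((ν x - 1) * ∏ l, (c l).1.1 x) := by
        intro x
        have : ∏ l, s (c l) x = σ * ∏ l, (c l).1.1 x := by
          rw [hσ, ← Finset.prod_mul_distrib]
          refine Finset.prod_congr rfl fun l _ => ?_
          simp only [hs]
          split <;> ring
        rw [this]; ring
      rw [avg_congr hexp, avg_const_mul, abs_mul, hσabs, one_mul]
      exact hν𝓕 k hk (fun l => (c l).1.1) (fun l => hmem𝓕 (c l))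
    obtain ⟨w, hwI, hwle⟩ := finite_lemma s hs1 ν g hν0 (fun x => (hg x).1)
      (fun x => (hg x).2) η hνavg hprod ε q hq0 (ε/6) (by positivity) hqapprox
      (by rw [← hM]; exact hbound)
    refine ⟨w, hwI, ?_⟩
    intro F hF
    rw [abs_le]
    constructor
    · have h1 := hwle (⟨⟨F, hF⟩, false⟩ : ι)
      have h2 : (avg X fun x => (g x - w x) * s (⟨⟨F, hF⟩, false⟩ : ι) x)
          = (-1) * avg X fun x => (g x - w x) * F x := by
        rw [← avg_const_mul]
        refine avg_congr fun x => ?_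
        simp only [hs, Bool.false_eq_true, if_false]
        ring
      rw [h2] at h1
      linarith
    · exact hwle (⟨⟨F, hF⟩, true⟩ : ι)
  obtain ⟨w, hw⟩ := IsCompact.nonempty_iInter_of_directed_nonempty_isCompact_isClosed
    K hKdir hKne hKcomp hKclosed
  rw [Set.mem_iInter] at hw
  refine ⟨w, (hw ⟨∅, by simp⟩).1, fun F hF => ?_⟩
  exact (hw ⟨{F}, by simpa using hF⟩).2 F (Finset.mem_singleton_self F)
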